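/- (Robustness of the coordinate-wise median estimator.) Let m > 2p and consider m sensors each measuring the full state: H_i = Iₙ and f_i(v) = ‖v‖₁ for all i. Then for every z = (z_1,…,z_m) with z_i ∈ ℝⁿ there exists μ ≥ 0 such that for every (p,m)-sparse attack a, every minimizer x̂ of x̂ ↦ Σ_{i=1}^m ‖z_i + a_i − x̂‖₁ satisfies ‖x̂‖ ≤ μ. -/

import Mathlib

open Finset

lemma median_key (M s : ℝ) (hs : M < |s|) :
    ∃ c : ℝ, 0 < |c - s| ∧ ∀ t, |t| ≤ M → |t - s| = |t - c| + |c - s| := by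
  rcases lt_abs.mp hs with h | h
  · refine ⟨M, ?_, ?_⟩
    · rw [abs_sub_comm, abs_of_pos (by linarith)]; linarith
    · intro t ht
      have ht' := (abs_le.mp ht).2
      rw [abs_of_nonpos (by linarith : t - s ≤ 0),
        abs_of_nonpos (by linarith : t - M ≤ 0),
        abs_sub_comm, abs_of_pos (by linarith : (0:ℝ) < s - M)]
      ring
  · refine ⟨-M, ?_, ?_⟩
    · rw [abs_of_pos (by linarith : (0:ℝ) < -M - s)]; linarith
    · intro t ht
      have ht' := (abs_le.mp ht).1
      rw [abs_of_nonneg (by linarith : (0:ℝ) ≤ t - s),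
        abs_of_nonneg (by linarith : (0:ℝ) ≤ t - -M),
        abs_of_pos (by linarith : (0:ℝ) < -M - s)]
      ring

/-- Robustness of the coordinate-wise median estimator: if `m > 2p` and each of
the `m` sensors measures the full state (`H i = I`, `f i = ‖·‖₁`), then for
every `z` there is a `μ ≥ 0` such that for every `(p,m)`-sparse attack `a`,
every minimizer of `x̂ ↦ ∑ i, ‖z i + a i - x̂‖₁` has norm at most `μ`. -/
theorem coordinatewise_median_robust (n m p : ℕ) (hpm : 2 * p < m)
    (z : Fin m → EuclideanSpace ℝ (Fin n)) :
    ∃ μ : ℝ, 0 ≤ μ ∧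
      ∀ a : Fin m → EuclideanSpace ℝ (Fin n),
        (∃ I : Finset (Fin m), I.card ≤ p ∧ ∀ i ∉ I, a i = 0) →
        ∀ xhat : EuclideanSpace ℝ (Fin n),
          (∀ x : EuclideanSpace ℝ (Fin n),
            ∑ i, ∑ j, |(z i + a i - xhat) j| ≤ ∑ i, ∑ j, |(z i + a i - x) j|) →
          ‖xhat‖ ≤ μ := by
  classical
  set M := ∑ i, ∑ j, |z i j| with hMdef
  have hM0 : 0 ≤ M :=
    Finset.sum_nonneg fun i _ => Finset.sum_nonneg fun j _ => abs_nonneg _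
  have hzM : ∀ i j, |z i j| ≤ M := by
    intro i j
    calc |z i j| ≤ ∑ j, |z i j| :=
          Finset.single_le_sum (f := fun k => |z i k|) (fun k _ => abs_nonneg _) (mem_univ j)
      _ ≤ M := by
          rw [hMdef]
          exact Finset.single_le_sum (f := fun i => ∑ j, |z i j|)
            (fun k _ => Finset.sum_nonneg fun _ _ => abs_nonneg _) (mem_univ i)
  refine ⟨Real.sqrt n * M, by positivity, ?_⟩
  rintro a ⟨I, hIp, hIa⟩ xhat hmin
  have hco : ∀ j, |xhat j| ≤ M := by
    intro j
    by_contra hj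
    push_neg at hj
    obtain ⟨c, hc0, hc⟩ := median_key M (xhat j) hj
    set x : EuclideanSpace ℝ (Fin n) := WithLp.toLp 2 (Function.update xhat j c) with hxdef
    have hxj : x j = c := Function.update_self j c xhat
    have hxk : ∀ k, k ≠ j → x k = xhat k := fun k hk => Function.update_of_ne hk c xhat
    have hsum : ∀ w : EuclideanSpace ℝ (Fin n), ∀ u : EuclideanSpace ℝ (Fin n),
        ∑ k, |(w - u) k| = |w j - u j| + ∑ k ∈ univ.erase j, |w k - u k| := by
      intro w u
      rw [← Finset.add_sum_erase _ _ (mem_univ j)]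
      simp [PiLp.sub_apply]
    have key : ∑ i, |(z i + a i) j - xhat j| ≤ ∑ i, |(z i + a i) j - c| := by
      have h := hmin x
      have h1 : ∀ i : Fin m, ∑ k, |(z i + a i - xhat) k|
          = |(z i + a i) j - xhat j| + ∑ k ∈ univ.erase j, |(z i + a i) k - xhat k| :=
        fun i => hsum _ _
      have h2 : ∀ i : Fin m, ∑ k, |(z i + a i - x) k|
          = |(z i + a i) j - c| + ∑ k ∈ univ.erase j, |(z i + a i) k - xhat k| := by
        intro i
        rw [hsum]
        congr 1
        · rw [hxj]
        · exact Finset.sum_congr rfl fun k hk => by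
            rw [hxk k (Finset.mem_erase.mp hk).1]
      simp only [h1, h2, Finset.sum_add_distrib] at h
      linarith
    set d := |c - xhat j| with hd
    have hhon : ∀ i ∉ I, |(z i + a i) j - xhat j| - |(z i + a i) j - c| = d := by
      intro i hi
      rw [hIa i hi]
      simp only [add_zero, PiLp.add_apply, PiLp.zero_apply]
      rw [hc (z i j) (hzM i j)]
      ring
    have hbad : ∀ i : Fin m, -d ≤ |(z i + a i) j - xhat j| - |(z i + a i) j - c| := by
      intro i
      have := abs_sub_abs_le_abs_sub ((z i + a i) j - c) ((z i + a i) j - xhat j)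
      have h2 : |(z i + a i) j - c - ((z i + a i) j - xhat j)| = d := by
        rw [hd, abs_sub_comm]
        congr 1; ring
      linarith
    have hsplit := Finset.sum_add_sum_compl I
      (fun i => |(z i + a i) j - xhat j| - |(z i + a i) j - c|)
    have hA : (-(I.card : ℝ)) * d ≤ ∑ i ∈ I,
        (|(z i + a i) j - xhat j| - |(z i + a i) j - c|) := by
      calc (-(I.card : ℝ)) * d = ∑ _i ∈ I, (-d) := by
            rw [Finset.sum_const, nsmul_eq_mul]; ring
        _ ≤ _ := Finset.sum_le_sum fun i _ => hbad i
    have hB : (Iᶜ.card : ℝ) * d ≤ ∑ i ∈ Iᶜ,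
        (|(z i + a i) j - xhat j| - |(z i + a i) j - c|) := by
      calc (Iᶜ.card : ℝ) * d = ∑ _i ∈ Iᶜ, d := by
            rw [Finset.sum_const, nsmul_eq_mul]
        _ ≤ _ := Finset.sum_le_sum fun i hi =>
            le_of_eq (hhon i (Finset.mem_compl.mp hi)).symm
    have hsum0 : ∑ i, (|(z i + a i) j - xhat j| - |(z i + a i) j - c|) ≤ 0 := by
      rw [Finset.sum_sub_distrib]
      linarith
    have hcard : (I.card : ℝ) < (Iᶜ.card : ℝ) := by
      have h1 : Iᶜ.card = m - I.card := by
        rw [Finset.card_compl, Fintype.card_fin]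
      have h2 : I.card < m - I.card := by omega
      exact_mod_cast (h1 ▸ h2)
    rw [← hsplit] at hsum0
    nlinarith [hc0]
  rw [EuclideanSpace.norm_eq]
  have hb : ∑ j, ‖xhat j‖ ^ 2 ≤ ∑ _j : Fin n, M ^ 2 := by
    refine Finset.sum_le_sum fun j _ => ?_
    rw [Real.norm_eq_abs]
    exact pow_le_pow_left₀ (abs_nonneg _) (hco j) 2
  calc Real.sqrt (∑ j, ‖xhat j‖ ^ 2) ≤ Real.sqrt (∑ _j : Fin n, M ^ 2) :=
        Real.sqrt_le_sqrt hb
    _ = Real.sqrt n * M := by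
        rw [Finset.sum_const, Finset.card_univ, Fintype.card_fin, nsmul_eq_mul,
          Real.sqrt_mul (by positivity), Real.sqrt_sq hM0]
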